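/- Let M be a positive real number, p real with 0 ≤ p < 1, and k, d, i integers with 2 ≤ k ≤ d and 1 ≤ i ≤ k−1. Define f(i) = 2·M·d/((2k−i−1)·i + 2k·(d−k+1)) and g(i) = (2d−2k+i+1)·i/(2d). Suppose γ' is a real number with f(i)/(1−p) ≤ γ' < f(i−1)/(1−p), and set β' = γ'/d and α = (M − g(i)·(1−p)·γ')/(k−i). Then ∑_{j=0}^{k−1} min{α, (d−j)·(1−p)·β'} = M. -/

import Mathlib

/-- Interior points of the bandwidth–storage tradeoff in a packet erasure network:
for `1 ≤ i ≤ k−1`, if the repair-bandwidth `γ'` satisfies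
`f(i)/(1−p) ≤ γ' < f(i−1)/(1−p)`, then with `β' = γ'/d` and
`α = (M − g(i)(1−p)γ')/(k−i)` the capacity equals the file size:
`∑_{j=0}^{k−1} min{α, (d−j)(1−p)β'} = M`. -/
theorem tradeoff_interior_point (M : ℝ) (hM : 0 < M)
    (p : ℝ) (hp0 : 0 ≤ p) (hp1 : p < 1)
    (k d i : ℕ) (hk : 2 ≤ k) (hkd : k ≤ d) (hi1 : 1 ≤ i) (hi2 : i ≤ k - 1)
    (f : ℕ → ℝ)
    (hf : ∀ j : ℕ, f j =
      2 * M * d / ((2 * (k : ℝ) - j - 1) * j + 2 * (k : ℝ) * ((d : ℝ) - k + 1)))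
    (g : ℕ → ℝ)
    (hg : ∀ j : ℕ, g j = (2 * (d : ℝ) - 2 * k + j + 1) * j / (2 * d))
    (γ' : ℝ) (hγ1 : f i / (1 - p) ≤ γ') (hγ2 : γ' < f (i - 1) / (1 - p))
    (β' α : ℝ) (hβ' : β' = γ' / d)
    (hα : α = (M - g i * (1 - p) * γ') / ((k : ℝ) - i)) :
    ∑ j ∈ Finset.range k, min α (((d : ℝ) - j) * (1 - p) * β') = M := by
  have hik : i < k := by omega
  have h1p : (0:ℝ) < 1 - p := by linarith
  have hk2 : (2:ℝ) ≤ (k:ℝ) := by exact_mod_cast hk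
  have hkdr : (k:ℝ) ≤ (d:ℝ) := by exact_mod_cast hkd
  have hi1r : (1:ℝ) ≤ (i:ℝ) := by exact_mod_cast hi1
  have hikr : (i:ℝ) < (k:ℝ) := by exact_mod_cast hik
  have hd0 : (0:ℝ) < (d:ℝ) := by linarith
  have hki0 : (0:ℝ) < (k:ℝ) - i := by linarith
  set s : ℝ := (1-p) * γ' with hs
  have hD : (0:ℝ) < (2*(k:ℝ)-i-1)*i + 2*(k:ℝ)*((d:ℝ)-(k:ℝ)+1) := by nlinarith
  have hfi : f i ≤ s := by rw [hs, mul_comm]; exact (div_le_iff₀ h1p).mp hγ1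
  have hMs : 2*M*(d:ℝ) ≤ s * ((2*(k:ℝ)-i-1)*i + 2*(k:ℝ)*((d:ℝ)-(k:ℝ)+1)) := by
    rw [hf i, div_le_iff₀ hD] at hfi; exact hfi
  have hs0 : (0:ℝ) < s := by
    have hfi0 : (0:ℝ) < f i := by
      rw [hf i]; exact div_pos (by positivity) hD
    linarith
  have hci : ((i-1:ℕ):ℝ) = (i:ℝ) - 1 := by
    rw [Nat.cast_sub hi1, Nat.cast_one]
  have hD' : (0:ℝ) < (2*(k:ℝ)-((i:ℝ)-1)-1)*((i:ℝ)-1) + 2*(k:ℝ)*((d:ℝ)-(k:ℝ)+1) := by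
    nlinarith
  have hsl : s < f (i-1) := by rw [hs, mul_comm]; exact (lt_div_iff₀ h1p).mp hγ2
  have hMs' : s * ((2*(k:ℝ)-((i:ℝ)-1)-1)*((i:ℝ)-1) + 2*(k:ℝ)*((d:ℝ)-(k:ℝ)+1)) < 2*M*(d:ℝ) := by
    rw [hf (i-1), hci, lt_div_iff₀ hD'] at hsl; exact hsl
  have hαc : α * (((k:ℝ)-i) * (2*(d:ℝ))) = 2*(d:ℝ)*M - (2*(d:ℝ)-2*(k:ℝ)+(i:ℝ)+1)*(i:ℝ)*s := by
    rw [hα, hg i, hs]; field_simp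
  have hterm : ∀ j:ℕ, ((d:ℝ)-j)*(1-p)*β' = ((d:ℝ)-j)*s/d := by
    intro j; rw [hβ', hs]; field_simp
  -- min resolution
  have key1 : ∀ j:ℕ, j < k - i → min α (((d:ℝ)-j)*(1-p)*β') = α := by
    intro j hj
    have hjr : (j:ℝ) + 1 ≤ (k:ℝ) - i := by
      have h : (j:ℕ) + 1 + i ≤ k := by omega
      have := (Nat.cast_le (α:=ℝ)).mpr h
      push_cast at this; linarith
    apply min_eq_left
    rw [hterm j, le_div_iff₀ hd0,
      ← mul_le_mul_iff_of_pos_right (show (0:ℝ) < ((k:ℝ)-i)*2 by linarith)]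
    have hint : (0:ℝ) ≤ ((k:ℝ)-i)*((k:ℝ)-i-1-j)*s :=
      mul_nonneg (mul_nonneg hki0.le (by linarith)) hs0.le
    linarith [hαc, hMs, hint]
  have key2 : ∀ j:ℕ, k - i ≤ j → min α (((d:ℝ)-j)*(1-p)*β') = ((d:ℝ)-j)*(1-p)*β' := by
    intro j hj
    have hjr : (k:ℝ) - i ≤ (j:ℝ) := by
      have h : k ≤ j + i := by omega
      have := (Nat.cast_le (α:=ℝ)).mpr h
      push_cast at this; linarith
    apply min_eq_right
    rw [hterm j, div_le_iff₀ hd0,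
      ← mul_le_mul_iff_of_pos_right (show (0:ℝ) < ((k:ℝ)-i)*2 by linarith)]
    have hint : (0:ℝ) ≤ ((k:ℝ)-i)*((j:ℝ)-((k:ℝ)-i))*s :=
      mul_nonneg (mul_nonneg hki0.le (by linarith)) hs0.le
    linarith [hαc, hMs', hint]
  -- split the sum
  rw [← Finset.sum_range_add_sum_Ico _ (Nat.sub_le k i)]
  have h1 : ∑ j ∈ Finset.range (k-i), min α (((d:ℝ)-j)*(1-p)*β') = ((k:ℝ)-i) * α := by
    rw [Finset.sum_congr rfl (fun j hj => key1 j (Finset.mem_range.mp hj))]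
    rw [Finset.sum_const, nsmul_eq_mul]
    simp [Nat.cast_sub hik.le]
  have h2 : ∑ j ∈ Finset.Ico (k-i) k, min α (((d:ℝ)-j)*(1-p)*β')
      = ((i:ℝ)*((d:ℝ)-(k:ℝ)+(i:ℝ)) - (i:ℝ)*((i:ℝ)-1)/2) * s / d := by
    rw [Finset.sum_congr rfl (fun j hj => key2 j (Finset.mem_Ico.mp hj).1)]
    rw [Finset.sum_congr rfl (fun j _ => hterm j)]
    rw [Finset.sum_Ico_eq_sum_range]
    have hki : k - (k - i) = i := by omega
    rw [hki]
    have hcast : ∀ m:ℕ, ((d:ℝ) - ((k - i + m : ℕ):ℝ)) = ((d:ℝ) - (k:ℝ) + (i:ℝ)) - m := by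
      intro m
      push_cast [Nat.cast_sub hik.le]
      ring
    rw [Finset.sum_congr rfl (fun m _ => by rw [hcast m])]
    have hgauss : ∑ m ∈ Finset.range i, (m:ℝ) = (i:ℝ)*((i:ℝ)-1)/2 := by
      have hn : (∑ m ∈ Finset.range i, m) * 2 = i * (i - 1) := Finset.sum_range_id_mul_two i
      have h2 : (((∑ m ∈ Finset.range i, m) * 2 : ℕ) : ℝ) = ((i * (i-1) : ℕ) : ℝ) := by
        rw [hn]
      push_cast [Nat.cast_sub hi1] at h2
      linarith
    rw [← Finset.sum_div, ← Finset.sum_mul]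
    congr 2
    rw [Finset.sum_sub_distrib, Finset.sum_const, hgauss, nsmul_eq_mul, Finset.card_range]
  rw [h1, h2]
  rw [hα, hg i]
  field_simp
  ring
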